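/- Let ε = 0, k ∈ {−1,0,1}, β > 0, and α, c ∈ ℝ with α² + 4kc > 0; let I be an open interval on which −k t² + α t + c > 0 and set b(t) = √(−k t² + α t + c). Then there exist t₀ ∈ ℝ and α' ≠ 0 such that b(t)² = α'(t − t₀) − k(t − t₀)² for all t ∈ I, and the energy density and pressure satisfy ρ(t) = p(t) = α'²/(4 (t − t₀)² (α' − k(t − t₀))²) > 0 on I. That is, after a time translation the metric takes the stiff-fluid form ds² = −dt² + dz² + (αt − kt²)[dr² + Σ(r,k)²dφ²] with ρ = p = α²/(4t²(α − kt)²). -/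

import Mathlib

/-- Orthonormal-tetrad Einstein tensor component `G₀₀` of the LRS metric
`ds² = −dt² + β²dz² + b(t)²[(dr − εr dz)² + Σ(r,k)²dφ²]`. -/
noncomputable def G00 (k ε β : ℝ) (b : ℝ → ℝ) (t : ℝ) : ℝ :=
  (k + (deriv b t) ^ 2) / (b t) ^ 2 - 3 * ε / β ^ 2

/-- Component `G₀₃`. -/
noncomputable def G03 (k ε β : ℝ) (b : ℝ → ℝ) (t : ℝ) : ℝ :=
  -2 * ε * (deriv b t) / (β * b t)

/-- Component `G₁₁ = G₂₂`. -/
noncomputable def G22 (k ε β : ℝ) (b : ℝ → ℝ) (t : ℝ) : ℝ :=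
  -(deriv (deriv b) t) / (b t) + ε / β ^ 2

/-- Component `G₃₃`. -/
noncomputable def G33 (k ε β : ℝ) (b : ℝ → ℝ) (t : ℝ) : ℝ :=
  -2 * (deriv (deriv b) t) / (b t) - (k + (deriv b t) ^ 2) / (b t) ^ 2 + ε / β ^ 2

/-- Energy density `ρ = G₂₂ + G₀₀ − G₃₃`. -/
noncomputable def rho (k ε β : ℝ) (b : ℝ → ℝ) (t : ℝ) : ℝ :=
  G22 k ε β b t + G00 k ε β b t - G33 k ε β b t

/-- Pressure `p = G₂₂`. -/
noncomputable def pres (k ε β : ℝ) (b : ℝ → ℝ) (t : ℝ) : ℝ :=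
  G22 k ε β b t

/-- For `ε = 0`, `k ∈ {−1,0,1}`, `β > 0`, constants `α, c` with
`α² + 4kc > 0`, and `b(t) = √(−k t² + α t + c)` on an open interval where the radicand is
positive, after a time translation `t ↦ t − t₀` the metric function takes the form
`b² = α'(t−t₀) − k(t−t₀)²` with `α' ≠ 0`, and
`ρ = p = α'²/(4(t−t₀)²(α'−k(t−t₀))²) > 0` on `I`: the stiff-fluid solution
`ds² = −dt² + dz² + (αt − kt²)[dr² + Σ(r,k)²dφ²]` with `ρ = p = α²/(4t²(α−kt)²)`. -/
lemma sqrt_quad_hasDeriv (k α c s : ℝ) (h : 0 < -k*s^2 + α*s + c) :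
    HasDerivAt (fun x => Real.sqrt (-k*x^2 + α*x + c))
      ((α - 2*k*s)/(2*Real.sqrt (-k*s^2 + α*s + c))) s := by
  have hq : HasDerivAt (fun x : ℝ => -k*x^2 + α*x + c) (α - 2*k*s) s := by
    have h1 : HasDerivAt (fun x : ℝ => x^2) (2*s) s := by simpa using hasDerivAt_pow 2 s
    have h2 := ((h1.const_mul (-k)).add ((hasDerivAt_id s).const_mul α)).add_const c
    exact h2.congr_deriv (by ring)
  have h3 := (Real.hasDerivAt_sqrt h.ne').comp s hq
  exact h3.congr_deriv (by ring)

lemma sqrt_quad_hasDeriv2 (k α c s : ℝ) (h : 0 < -k*s^2 + α*s + c) :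
    HasDerivAt (fun x => (α - 2*k*x)/(2*Real.sqrt (-k*x^2 + α*x + c)))
      (((-2*k)*(2*Real.sqrt (-k*s^2 + α*s + c)) -
          (α - 2*k*s)*((α - 2*k*s)/Real.sqrt (-k*s^2 + α*s + c)))
        /(2*Real.sqrt (-k*s^2 + α*s + c))^2) s := by
  have hS : 0 < Real.sqrt (-k*s^2 + α*s + c) := Real.sqrt_pos.mpr h
  have hnum : HasDerivAt (fun x : ℝ => α - 2*k*x) (-2*k) s := by
    have h2 := ((hasDerivAt_id s).const_mul (2*k)).const_sub α
    exact h2.congr_deriv (by ring)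
  have hden := (sqrt_quad_hasDeriv k α c s h).const_mul 2
  have h4 := hnum.div hden (by positivity)
  have h5 : (2:ℝ)*((α - 2*k*s)/(2*Real.sqrt (-k*s^2 + α*s + c)))
      = (α - 2*k*s)/Real.sqrt (-k*s^2 + α*s + c) := by
    rw [mul_div_assoc', mul_div_mul_left _ _ (two_ne_zero (α := ℝ))]
  rw [h5] at h4
  exact h4

lemma main_calc (k β α c t₀ α' t : ℝ) (hα' : α' ≠ 0)
    (hα : α = α' + 2*k*t₀) (hc : c = -(α'*t₀) - k*t₀^2)
    (hQ : 0 < -k * t ^ 2 + α * t + c) :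
    rho k 0 β (fun s => Real.sqrt (-k * s ^ 2 + α * s + c)) t =
        α' ^ 2 / (4 * (t - t₀) ^ 2 * (α' - k * (t - t₀)) ^ 2) ∧
    pres k 0 β (fun s => Real.sqrt (-k * s ^ 2 + α * s + c)) t =
        rho k 0 β (fun s => Real.sqrt (-k * s ^ 2 + α * s + c)) t ∧
    0 < rho k 0 β (fun s => Real.sqrt (-k * s ^ 2 + α * s + c)) t := by
  set S := Real.sqrt (-k*t^2 + α*t + c) with hSdef
  have hS : 0 < S := Real.sqrt_pos.mpr hQ
  have hS2 : S^2 = α'*(t-t₀) - k*(t-t₀)^2 := by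
    rw [hSdef, Real.sq_sqrt hQ.le, hα, hc]; ring
  have hu : t - t₀ ≠ 0 := by
    intro h; rw [h] at hS2; simp at hS2; nlinarith
  have hv : α' - k*(t-t₀) ≠ 0 := by
    intro h
    have h2 : S^2 = (t-t₀)*(α' - k*(t-t₀)) := by rw [hS2]; ring
    rw [h, mul_zero] at h2; nlinarith
  have hU : IsOpen {s : ℝ | 0 < -k*s^2 + α*s + c} := by
    apply isOpen_lt continuous_const
    fun_prop
  have hev : (deriv (fun s => Real.sqrt (-k*s^2 + α*s + c))) =ᶠ[nhds t]
      (fun s => (α - 2*k*s)/(2*Real.sqrt (-k*s^2 + α*s + c))) := by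
    filter_upwards [hU.mem_nhds hQ] with s hs
    exact (sqrt_quad_hasDeriv k α c s hs).deriv
  have hd1 : deriv (fun s => Real.sqrt (-k*s^2 + α*s + c)) t = (α - 2*k*t)/(2*S) :=
    (sqrt_quad_hasDeriv k α c t hQ).deriv
  have hd2 : deriv (deriv (fun s => Real.sqrt (-k*s^2 + α*s + c))) t =
      ((-2*k)*(2*S) - (α - 2*k*t)*((α - 2*k*t)/S))/(2*S)^2 := by
    rw [hev.deriv_eq]
    exact (sqrt_quad_hasDeriv2 k α c t hQ).deriv
  have hE : α - 2*k*t = α' - 2*k*(t-t₀) := by rw [hα]; ring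
  have hrho : rho k 0 β (fun s => Real.sqrt (-k * s ^ 2 + α * s + c)) t =
      α' ^ 2 / (4 * (t - t₀) ^ 2 * (α' - k * (t - t₀)) ^ 2) := by
    simp only [rho, G00, G22, G33]
    rw [hd1, hd2, ← hSdef, hE]
    have hS' : S ≠ 0 := hS.ne'
    field_simp
    ring_nf
    simp only [show S^8 = (S^2)^4 by ring, show S^6 = (S^2)^3 by ring,
        show S^4 = (S^2)^2 by ring, hS2]
    ring
  refine ⟨hrho, ?_, ?_⟩
  · rw [hrho]
    simp only [pres, G22]
    rw [hd2, ← hSdef, hE]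
    have hS' : S ≠ 0 := hS.ne'
    field_simp
    ring_nf
    simp only [show S^8 = (S^2)^4 by ring, show S^6 = (S^2)^3 by ring,
        show S^4 = (S^2)^2 by ring, hS2]
    ring
  · rw [hrho]
    have h1 : 0 < (t - t₀)^2 := lt_of_le_of_ne (sq_nonneg _) (Ne.symm (pow_ne_zero 2 hu))
    have h2 : 0 < (α' - k*(t-t₀))^2 := lt_of_le_of_ne (sq_nonneg _) (Ne.symm (pow_ne_zero 2 hv))
    have h3 : 0 < α'^2 := lt_of_le_of_ne (sq_nonneg _) (Ne.symm (pow_ne_zero 2 hα'))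
    positivity

theorem eps_zero_stiff_fluid_normal_form (k β α c : ℝ)
    (hk : k = -1 ∨ k = 0 ∨ k = 1) (hβ : 0 < β) (hdisc : 0 < α ^ 2 + 4 * k * c)
    (I : Set ℝ) (hI : ∃ x y : ℝ, I = Set.Ioo x y)
    (hpos : ∀ t ∈ I, 0 < -k * t ^ 2 + α * t + c) :
    ∃ t₀ α' : ℝ, α' ≠ 0 ∧
      (∀ t ∈ I,
        (Real.sqrt (-k * t ^ 2 + α * t + c)) ^ 2 =
          α' * (t - t₀) - k * (t - t₀) ^ 2) ∧
      (∀ t ∈ I,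
        rho k 0 β (fun s => Real.sqrt (-k * s ^ 2 + α * s + c)) t =
            α' ^ 2 / (4 * (t - t₀) ^ 2 * (α' - k * (t - t₀)) ^ 2) ∧
        pres k 0 β (fun s => Real.sqrt (-k * s ^ 2 + α * s + c)) t =
            rho k 0 β (fun s => Real.sqrt (-k * s ^ 2 + α * s + c)) t ∧
        0 < rho k 0 β (fun s => Real.sqrt (-k * s ^ 2 + α * s + c)) t) := by
  obtain ⟨t₀, α', hα', hα, hc⟩ :
      ∃ t₀ α' : ℝ, α' ≠ 0 ∧ α = α' + 2*k*t₀ ∧ c = -(α'*t₀) - k*t₀^2 := by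
    by_cases hk0 : k = 0
    · have hα0 : α ≠ 0 := by
        intro h; rw [h, hk0] at hdisc; norm_num at hdisc
      refine ⟨-c/α, α, hα0, by rw [hk0]; ring, ?_⟩
      rw [hk0]; field_simp; ring
    · have hD : (0:ℝ) < Real.sqrt (α^2 + 4*k*c) := Real.sqrt_pos.mpr hdisc
      have hD2 : (Real.sqrt (α^2 + 4*k*c))^2 = α^2 + 4*k*c := Real.sq_sqrt hdisc.le
      refine ⟨(α - Real.sqrt (α^2 + 4*k*c))/(2*k), Real.sqrt (α^2 + 4*k*c), hD.ne', ?_, ?_⟩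
      · field_simp; ring
      · field_simp
        rw [show α ^ 2 + c * 4 * k = α^2 + 4*k*c by ring]
        nlinarith [hD2]
  refine ⟨t₀, α', hα', ?_, ?_⟩
  · intro t ht
    rw [Real.sq_sqrt (hpos t ht).le, hα, hc]; ring
  · intro t ht
    exact main_calc k β α c t₀ α' t hα' hα hc (hpos t ht)
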